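/- Let Λ = (λ_k)_{k≥0} be a strictly increasing sequence of positive real numbers satisfying the Müntz condition Σ_k 1/λ_k < ∞. Then no subsequence of the sequence of functions (x ↦ x^{λ_n})_{n∈ℕ} converges in the weak topology of C([0,1]); consequently the Cesàro operator Γ_Λ on M_Λ^1, which maps the normalized functions f_n(x) = (λ_n + 1)x^{λ_n} to x ↦ x^{λ_n}, is not weakly compact. -/

import Mathlib

open MeasureTheory Set Filter Topology

/-- Lebesgue measure restricted to `[0,1]`. -/
noncomputable def mu01 : Measure ℝ := volume.restrict (Icc (0:ℝ) 1)

/-- The Müntz space `M_Λ^1`: the closure in `L¹([0,1])` of the linear span of the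
monomials `t ↦ t ^ Λ k`. -/
noncomputable def muntzSpace (Λ : ℕ → ℝ) : Submodule ℝ (Lp ℝ 1 mu01) :=
  (Submodule.span ℝ {f : Lp ℝ 1 mu01 |
    ∃ k : ℕ, (f : ℝ → ℝ) =ᵐ[mu01] fun t => t ^ Λ k}).topologicalClosure

/-- A bounded linear operator between normed spaces is weakly compact if the closure,
in the weak topology of the codomain, of the image of the closed unit ball is compact. -/
def IsWeaklyCompactOperator {X Y : Type*} [NormedAddCommGroup X] [NormedSpace ℝ X]
    [NormedAddCommGroup Y] [NormedSpace ℝ Y] (S : X →L[ℝ] Y) : Prop :=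
  IsCompact (closure ((toWeakSpace ℝ Y) '' (⇑S '' Metric.closedBall 0 1)))

instance : IsFiniteMeasure mu01 := by
  constructor
  rw [mu01, Measure.restrict_apply_univ]
  simp

/-- No continuous function on `[0,1]` equals `0` away from `1` and `1` at `1`. -/
lemma aux_noCont (g : C(Icc (0:ℝ) 1, ℝ))
    (hg : ∀ x : Icc (0:ℝ) 1, g x = if (x:ℝ) = 1 then 1 else 0) : False := by
  have h1 : (1:ℝ) ∈ Icc (0:ℝ) 1 := ⟨zero_le_one, le_refl 1⟩
  have hmem : ∀ j : ℕ, 1 - 1/(j+1 : ℝ) ∈ Icc (0:ℝ) 1 := by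
    intro j
    have hp1 : (0:ℝ) < (j:ℝ) + 1 := by positivity
    constructor
    · have h2 : 1/((j:ℝ)+1) ≤ 1 := by
        rw [div_le_one hp1]; linarith [Nat.cast_nonneg (α := ℝ) j]
      linarith
    · have h2 : 0 < 1/((j:ℝ)+1) := by positivity
      linarith
  set u : ℕ → Icc (0:ℝ) 1 := fun j => ⟨1 - 1/((j:ℝ)+1), hmem j⟩ with hu_def
  have hu : Tendsto u atTop (𝓝 ⟨1, h1⟩) := by
    rw [tendsto_subtype_rng]
    have h2 : Tendsto (fun j : ℕ => 1 - 1/((j:ℝ)+1)) atTop (𝓝 (1 - 0)) :=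
      tendsto_const_nhds.sub tendsto_one_div_add_atTop_nhds_zero_nat
    simpa [hu_def] using h2
  have h2 : Tendsto (fun j => g (u j)) atTop (𝓝 (g ⟨1, h1⟩)) :=
    (g.continuous.tendsto _).comp hu
  have h3 : ∀ j, g (u j) = 0 := by
    intro j
    rw [hg]
    have hlt : ((u j : ℝ)) ≠ 1 := by
      have hpos : 0 < 1/((j:ℝ)+1) := by positivity
      show (1 - 1/((j:ℝ)+1) : ℝ) ≠ 1
      intro hcon
      linarith
    rw [if_neg hlt]
  have h4 : g ⟨1, h1⟩ = 1 := by rw [hg]; simp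
  rw [h4] at h2
  have h5 : Tendsto (fun _ : ℕ => (0:ℝ)) atTop (𝓝 1) := by
    simpa [h3] using h2
  have := tendsto_nhds_unique h5 tendsto_const_nhds
  norm_num at this

/-- Pointwise limit of `x ^ c n` for `x ∈ [0,1]` and `c n → ∞`. -/
lemma aux_ptlim (c : ℕ → ℝ) (hc : Tendsto c atTop atTop) {x : ℝ}
    (hx0 : 0 ≤ x) (hx1 : x ≤ 1) :
    Tendsto (fun n => x ^ c n) atTop (𝓝 (if x = 1 then 1 else 0)) := by
  by_cases h : x = 1
  · simp only [h, Real.one_rpow, if_pos rfl]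
    exact tendsto_const_nhds
  · have hlt : x < 1 := lt_of_le_of_ne hx1 h
    simp only [if_neg h]
    exact (tendsto_rpow_atTop_of_base_lt_one x (by linarith) hlt).comp hc

/-- Uniqueness of cluster points of convergent sequences in Hausdorff spaces. -/
lemma aux_clusterPt_unique {α : Type*} [TopologicalSpace α] [T2Space α] {u : ℕ → α} {a b : α}
    (h : Tendsto u atTop (𝓝 a)) (hb : ClusterPt b (map u atTop)) : b = a :=
  eq_of_nhds_neBot (hb.mono h)

/-- Under the Müntz condition, no subsequence of the monomials
`x ↦ x ^ λ_n` converges in the weak topology of `C([0,1])`; consequently the Cesàro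
operator `Γ_Λ : M_Λ^1 → C([0,1])` is not weakly compact. -/
theorem monomials_no_weakly_convergent_subsequence_and_cesaro_not_weaklyCompact
    (Λ : ℕ → ℝ) (hmono : StrictMono Λ) (hpos : ∀ k, 0 < Λ k)
    (hmuntz : Summable fun k => 1 / Λ k)
    (p : ℕ → C(Icc (0:ℝ) 1, ℝ)) (hp : ∀ (n : ℕ) (x : Icc (0:ℝ) 1), p n x = (x:ℝ) ^ Λ n)
    (Γ : ↥(muntzSpace Λ) →L[ℝ] C(Icc (0:ℝ) 1, ℝ))
    (hΓ : ∀ (f : ↥(muntzSpace Λ)) (x : Icc (0:ℝ) 1), (x:ℝ) ≠ 0 →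
      Γ f x = (1/(x:ℝ)) * ∫ t in Ioc (0:ℝ) (x:ℝ), ((f : Lp ℝ 1 mu01) : ℝ → ℝ) t ∂mu01) :
    (¬ ∃ (φ : ℕ → ℕ) (g : C(Icc (0:ℝ) 1, ℝ)), StrictMono φ ∧
      Tendsto (fun n => toWeakSpace ℝ C(Icc (0:ℝ) 1, ℝ) (p (φ n))) atTop
        (𝓝 (toWeakSpace ℝ C(Icc (0:ℝ) 1, ℝ) g))) ∧
    ¬ IsWeaklyCompactOperator Γ := by
  classical
  -- Λ tends to infinity
  have hΛtop : Tendsto Λ atTop atTop := by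
    have h0 : Tendsto (fun k => 1 / Λ k) atTop (𝓝[>] 0) :=
      tendsto_nhdsWithin_of_tendsto_nhds_of_eventually_within _ hmuntz.tendsto_atTop_zero
        (Eventually.of_forall fun k => mem_Ioi.mpr (by have := hpos k; positivity))
    have h1 := h0.inv_tendsto_nhdsGT_zero
    simpa [Pi.inv_def, one_div] using h1
  -- continuity of evaluation on the weak space
  have hevcont : ∀ x : Icc (0:ℝ) 1,
      Continuous fun w : WeakSpace ℝ C(Icc (0:ℝ) 1, ℝ) => (ContinuousMap.evalCLM ℝ x) ((toWeakSpace ℝ C(Icc (0:ℝ) 1, ℝ)).symm w) :=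
    fun x => WeakBilin.eval_continuous
      ((topDualPairing ℝ C(Icc (0:ℝ) 1, ℝ)).flip) (ContinuousMap.evalCLM ℝ x)
  constructor
  · -- Part 1: no weakly convergent subsequence
    rintro ⟨φ, g, hφ, htend⟩
    apply aux_noCont g
    intro x
    have hev := ((hevcont x).tendsto _).comp htend
    have heq : (fun n => (ContinuousMap.evalCLM ℝ x)
        ((toWeakSpace ℝ C(Icc (0:ℝ) 1, ℝ)).symm
          (toWeakSpace ℝ C(Icc (0:ℝ) 1, ℝ) (p (φ n))))) = fun n => (x:ℝ) ^ Λ (φ n) := by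
      funext n
      rw [LinearEquiv.symm_apply_apply]
      exact hp (φ n) x
    have hev'' : Tendsto (fun n => (x:ℝ) ^ Λ (φ n)) atTop (𝓝 (g x)) := by
      have h2 := hev
      rw [Function.comp_def] at h2
      rw [heq] at h2
      simpa [LinearEquiv.symm_apply_apply] using h2
    exact tendsto_nhds_unique hev''
      (aux_ptlim (Λ ∘ φ) (hΛtop.comp hφ.tendsto_atTop) x.2.1 x.2.2)
  · -- Part 2: Γ is not weakly compact
    intro hcpt
    -- the normalized monomials in L¹
    have hmeas : ∀ n, MemLp (fun t : ℝ => t ^ Λ n) 1 mu01 := by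
      intro n
      refine MemLp.of_bound ((Real.continuous_rpow_const (hpos n).le).aestronglyMeasurable) 1 ?_
      rw [mu01]
      filter_upwards [ae_restrict_mem measurableSet_Icc] with t ht
      rw [Real.norm_eq_abs, abs_of_nonneg (Real.rpow_nonneg ht.1 _)]
      exact Real.rpow_le_one ht.1 ht.2 (hpos n).le
    set e : ℕ → Lp ℝ 1 mu01 := fun n => (hmeas n).toLp _ with he_def
    have he : ∀ n, (e n : ℝ → ℝ) =ᵐ[mu01] fun t => t ^ Λ n := fun n => (hmeas n).coeFn_toLp
    have hspan : ∀ n, e n ∈ muntzSpace Λ := fun n =>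
      Submodule.le_topologicalClosure _ (Submodule.subset_span ⟨n, he n⟩)
    set F : ℕ → ↥(muntzSpace Λ) :=
      fun n => ⟨(Λ n + 1) • e n, Submodule.smul_mem _ _ (hspan n)⟩ with hF_def
    have hΛ1 : ∀ n, (0:ℝ) < Λ n + 1 := fun n => by linarith [hpos n]
    -- norm of e n
    have hnorm : ∀ n, ‖e n‖ = (Λ n + 1)⁻¹ := by
      intro n
      rw [L1.norm_eq_integral_norm]
      have h1 : (fun a => ‖(e n : ℝ → ℝ) a‖) =ᵐ[mu01] fun a => ‖a ^ Λ n‖ := by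
        filter_upwards [he n] with a ha
        rw [ha]
      rw [integral_congr_ae h1, mu01]
      rw [setIntegral_congr_fun measurableSet_Icc
        (fun a ha => by
          rw [Real.norm_eq_abs, abs_of_nonneg (Real.rpow_nonneg ha.1 _)])]
      rw [integral_Icc_eq_integral_Ioc, ← intervalIntegral.integral_of_le zero_le_one,
        integral_rpow (Or.inl (by linarith [hpos n]))]
      rw [Real.one_rpow, Real.zero_rpow (hΛ1 n).ne']
      ring
    -- the key integral identity
    have hI : ∀ (n : ℕ) (x : ℝ), 0 < x → x ≤ 1 →
        ∫ t in Ioc (0:ℝ) x, (((F n : Lp ℝ 1 mu01)) : ℝ → ℝ) t ∂mu01 = x ^ (Λ n + 1) := by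
      intro n x hx0 hx1
      have hae : (((F n : Lp ℝ 1 mu01)) : ℝ → ℝ) =ᵐ[mu01] fun t => (Λ n + 1) * t ^ Λ n := by
        filter_upwards [Lp.coeFn_smul ((Λ n) + 1 : ℝ) (e n), he n] with t h1 h2
        show (((Λ n + 1) • e n : Lp ℝ 1 mu01) : ℝ → ℝ) t = (Λ n + 1) * t ^ Λ n
        rw [h1]
        simp [h2]
      rw [setIntegral_congr_ae measurableSet_Ioc (hae.mono fun t h _ => h)]
      have hsub : Ioc (0:ℝ) x ⊆ Icc (0:ℝ) 1 := fun t ht => ⟨ht.1.le, ht.2.trans hx1⟩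
      rw [mu01, Measure.restrict_restrict measurableSet_Ioc, inter_eq_left.mpr hsub]
      rw [← intervalIntegral.integral_of_le hx0.le, intervalIntegral.integral_const_mul,
        integral_rpow (Or.inl (by linarith [hpos n]))]
      rw [Real.zero_rpow (hΛ1 n).ne', sub_zero]
      rw [mul_comm, div_mul_cancel₀ _ (hΛ1 n).ne']
    -- Γ (F n) agrees with p n away from 0
    have hkey : ∀ (n : ℕ) (x : Icc (0:ℝ) 1), (x:ℝ) ≠ 0 → Γ (F n) x = (x:ℝ) ^ Λ n := by
      intro n x hx
      have hx0 : 0 < (x:ℝ) := lt_of_le_of_ne x.2.1 (Ne.symm hx)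
      rw [hΓ (F n) x hx, hI n x hx0 x.2.2, Real.rpow_add hx0, Real.rpow_one]
      field_simp
    -- Γ (F n) = p n
    have hΓF : ∀ n, Γ (F n) = p n := by
      intro n
      ext x
      by_cases hx : (x:ℝ) = 0
      · -- continuity argument at 0
        have hmemu : ∀ j : ℕ, 1/((j:ℝ)+1) ∈ Icc (0:ℝ) 1 := by
          intro j
          have hp1 : (0:ℝ) < (j:ℝ) + 1 := by positivity
          refine ⟨by positivity, ?_⟩
          rw [div_le_one hp1]; linarith [Nat.cast_nonneg (α := ℝ) j]
        set u : ℕ → Icc (0:ℝ) 1 := fun j => ⟨1/((j:ℝ)+1), hmemu j⟩ with hu_def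
        have hx' : x = ⟨0, by constructor <;> norm_num⟩ := Subtype.ext hx
        have huval : Tendsto (fun j : ℕ => ((u j : ℝ))) atTop (𝓝 0) := by
          simpa [hu_def] using (tendsto_one_div_add_atTop_nhds_zero_nat : Tendsto (fun j : ℕ => 1 / ((j:ℝ) + 1)) atTop (𝓝 0))
        have hu : Tendsto u atTop (𝓝 x) := by
          rw [tendsto_subtype_rng, hx']
          exact huval
        have h1 : Tendsto (fun j => Γ (F n) (u j)) atTop (𝓝 (Γ (F n) x)) :=
          ((Γ (F n)).continuous.tendsto x).comp hu
        have h2 : ∀ j, Γ (F n) (u j) = ((u j : ℝ)) ^ Λ n := by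
          intro j
          refine hkey n (u j) ?_
          have : (0:ℝ) < 1/((j:ℝ)+1) := by positivity
          simp only [hu_def]
          exact this.ne'
        have h3 : Tendsto (fun j => ((u j : ℝ)) ^ Λ n) atTop (𝓝 0) := by
          have hc : ContinuousAt (fun y : ℝ => y ^ Λ n) 0 :=
            Real.continuousAt_rpow_const 0 _ (Or.inr (hpos n).le)
          have h4 := hc.tendsto.comp huval
          simpa [Function.comp_def, Real.zero_rpow (hpos n).ne'] using h4
        have h5 : Γ (F n) x = 0 := by
          refine tendsto_nhds_unique ?_ h3
          simpa [h2] using h1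
        rw [h5, hp n x, hx, Real.zero_rpow (hpos n).ne']
      · rw [hkey n x hx, hp n x]
    -- the functions F n lie in the unit ball
    have hFball : ∀ n, F n ∈ Metric.closedBall (0 : ↥(muntzSpace Λ)) 1 := by
      intro n
      rw [Metric.mem_closedBall, dist_zero_right]
      have h1 : ‖F n‖ = ‖(Λ n + 1) • e n‖ := by
        rw [hF_def]
        exact Submodule.coe_norm _
      rw [h1, norm_smul, hnorm n, Real.norm_eq_abs, abs_of_pos (hΛ1 n),
        mul_inv_cancel₀ (hΛ1 n).ne']
    -- the monomials lie in the (closure of the) image of the unit ball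
    have hmemS : ∀ n, toWeakSpace ℝ C(Icc (0:ℝ) 1, ℝ) (p n) ∈
        closure ((toWeakSpace ℝ C(Icc (0:ℝ) 1, ℝ)) '' (⇑Γ '' Metric.closedBall 0 1)) := by
      intro n
      exact subset_closure ⟨Γ (F n), ⟨F n, hFball n, rfl⟩, by rw [hΓF n]⟩
    -- extract a cluster point
    haveI hneB : (map (fun n => toWeakSpace ℝ C(Icc (0:ℝ) 1, ℝ) (p n)) atTop).NeBot := map_neBot
    have hcpt' : IsCompact (closure ((toWeakSpace ℝ C(Icc (0:ℝ) 1, ℝ)) ''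
        (⇑Γ '' Metric.closedBall 0 1))) := hcpt
    obtain ⟨g, _, hg⟩ := hcpt'.exists_clusterPt
      (f := map (fun n => toWeakSpace ℝ C(Icc (0:ℝ) 1, ℝ) (p n)) atTop)
      (le_principal_iff.mpr (mem_map.mpr (Eventually.of_forall hmemS)))
    -- identify the cluster point pointwise
    apply aux_noCont ((toWeakSpace ℝ C(Icc (0:ℝ) 1, ℝ)).symm g)
    intro x
    have hclx : ClusterPt ((ContinuousMap.evalCLM ℝ x) ((toWeakSpace ℝ C(Icc (0:ℝ) 1, ℝ)).symm g))
        (map (fun w : WeakSpace ℝ C(Icc (0:ℝ) 1, ℝ) => (ContinuousMap.evalCLM ℝ x) ((toWeakSpace ℝ C(Icc (0:ℝ) 1, ℝ)).symm w))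
          (map (fun n => toWeakSpace ℝ C(Icc (0:ℝ) 1, ℝ) (p n)) atTop)) :=
      hg.map (hevcont x).continuousAt tendsto_map
    rw [Filter.map_map] at hclx
    have hclx' : ClusterPt (((toWeakSpace ℝ C(Icc (0:ℝ) 1, ℝ)).symm g) x)
        (map (fun n => (x:ℝ) ^ Λ n) atTop) := by
      have heq : (fun n => (ContinuousMap.evalCLM ℝ x)
          ((toWeakSpace ℝ C(Icc (0:ℝ) 1, ℝ)).symm (toWeakSpace ℝ C(Icc (0:ℝ) 1, ℝ) (p n)))) = fun n => (x:ℝ) ^ Λ n := by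
        funext n
        rw [LinearEquiv.symm_apply_apply]
        exact hp n x
      rwa [Function.comp_def, heq] at hclx
    exact aux_clusterPt_unique (aux_ptlim Λ hΛtop x.2.1 x.2.2) hclx'
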